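/- Along solutions of the error system of γ-Observer 2 (with |γ̄| = 1), the function S0 = (1/2)|v̄ × γ̄|² + (g/k₁ʳ)(1 − e₃ᵀγ̄) satisfies dS0/dt = −(k₁ᵛ + k₂ᵛ)|v̄ × γ̄|². -/

import Mathlib

open Matrix

noncomputable section

def cross3 (u v : Fin 3 → ℝ) : Fin 3 → ℝ :=
  ![u 1 * v 2 - u 2 * v 1, u 2 * v 0 - u 0 * v 2, u 0 * v 1 - u 1 * v 0]

def norm3 (u : Fin 3 → ℝ) : ℝ := Real.sqrt (u ⬝ᵥ u)

def e3 : Fin 3 → ℝ := ![0, 0, 1]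

/-- along the error system of `γ`-Observer 2, the function
`S0 = (1/2)|v̄ × γ̄|² + (g/k₁ʳ)(1 − e₃ᵀγ̄)` satisfies
`dS0/dt = −(k₁ᵛ + k₂ᵛ)|v̄ × γ̄|²`. -/
theorem stmt_9 (g k1v k2v k1r : ℝ) (hg : 0 < g) (h1 : 0 < k1v) (h2 : 0 < k2v)
    (h3 : 0 < k1r) (v γ : ℝ → Fin 3 → ℝ)
    (hγunit : ∀ t, norm3 (γ t) = 1)
    (hv : ∀ t, HasDerivAt v
      (g • (e3 - γ t) - k1v • v t + k2v • cross3 (γ t) (cross3 (γ t) (v t))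
        + k1r • cross3 (v t) (cross3 (v t) (γ t))) t)
    (hγ : ∀ t, HasDerivAt γ (-(k1r • cross3 (γ t) (cross3 (γ t) (v t)))) t) :
    ∀ t, HasDerivAt
      (fun s => (1 / 2) * (cross3 (v s) (γ s) ⬝ᵥ cross3 (v s) (γ s))
        + (g / k1r) * (1 - e3 ⬝ᵥ γ s))
      (-((k1v + k2v) * (cross3 (v t) (γ t) ⬝ᵥ cross3 (v t) (γ t)))) t := by
  intro t
  have hunit : γ t 0 * γ t 0 + γ t 1 * γ t 1 + γ t 2 * γ t 2 = 1 := by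
    have h := hγunit t
    rw [norm3, Real.sqrt_eq_one] at h
    simpa [dotProduct, Fin.sum_univ_three] using h
  have hv' := hasDerivAt_pi.mp (hv t)
  have hγ' := hasDerivAt_pi.mp (hγ t)
  have hv0 := hv' 0; have hv1 := hv' 1; have hv2 := hv' 2
  have hγ0 := hγ' 0; have hγ1 := hγ' 1; have hγ2 := hγ' 2
  simp only [cross3, e3, Pi.add_apply, Pi.sub_apply, Pi.smul_apply, Pi.neg_apply,
    smul_eq_mul, Matrix.cons_val_zero, Matrix.cons_val_one, Matrix.head_cons,
    Matrix.cons_val_two, Matrix.tail_cons] at hv0 hv1 hv2 hγ0 hγ1 hγ2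
  have w0 := (hv1.mul hγ2).sub (hv2.mul hγ1)
  have w1 := (hv2.mul hγ0).sub (hv0.mul hγ2)
  have w2 := (hv0.mul hγ1).sub (hv1.mul hγ0)
  have H := (((w0.mul w0).add (w1.mul w1)).add (w2.mul w2)).const_mul (1/2 : ℝ) |>.add
    (((hasDerivAt_const t (1:ℝ)).sub hγ2).const_mul (g / k1r))
  simp only [cross3, e3, dotProduct, Fin.sum_univ_three, Matrix.cons_val_zero,
    Matrix.cons_val_one, Matrix.head_cons, Matrix.cons_val_two, Matrix.tail_cons,
    zero_mul, one_mul, zero_add]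
  convert H using 1
  · rfl
  · rfl
  · rfl
  have hk : k1r ≠ 0 := ne_of_gt h3
  simp only [Pi.mul_apply, Pi.sub_apply]
  field_simp
  linear_combination
    ((2:ℝ) * k2v * k1r * ((v t 1 * γ t 2 - v t 2 * γ t 1) * (v t 1 * γ t 2 - v t 2 * γ t 1)
      + (v t 2 * γ t 0 - v t 0 * γ t 2) * (v t 2 * γ t 0 - v t 0 * γ t 2)
      + (v t 0 * γ t 1 - v t 1 * γ t 0) * (v t 0 * γ t 1 - v t 1 * γ t 0))) * hunit
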